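/- Let f* be an arbitrary probability density on ℝ (symmetry not required), and let f_r be its r-smoothing with score function s_r. For every x ∈ ℝ with f_r(x) > 0, |s_r(x)| ≤ (1/r)·√(2·log(1/(√(2π)·r·f_r(x)))). -/

import Mathlib

open MeasureTheory Real Filter

/-- Density of the Gaussian `N(0, r²)`. -/
noncomputable def gaussDensity (r x : ℝ) : ℝ :=
  (Real.sqrt (2 * Real.pi * r ^ 2))⁻¹ * Real.exp (-x ^ 2 / (2 * r ^ 2))

/-- The `r`-smoothed density `f_r(x) = ∫ f(y) w_r(x − y) dy`. -/
noncomputable def smoothed (f : ℝ → ℝ) (r x : ℝ) : ℝ :=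
  ∫ y, f y * gaussDensity r (x - y)

/-- The score function `s_r(x) = f_r'(x) / f_r(x)` of the smoothed density. -/
noncomputable def score (f : ℝ → ℝ) (r x : ℝ) : ℝ :=
  deriv (smoothed f r) x / smoothed f r x

/-- The `r`-smoothed Fisher information `I_r = E_{x∼f_r}[s_r(x)²]`. -/
noncomputable def fisherInfo (f : ℝ → ℝ) (r : ℝ) : ℝ :=
  ∫ x, smoothed f r x * score f r x ^ 2

/-- The measure on ℝ with density `f` with respect to Lebesgue measure. -/
noncomputable def densMeasure (f : ℝ → ℝ) : Measure ℝ :=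
  MeasureTheory.volume.withDensity fun x => ENNReal.ofReal (f x)

/-- `f` is a probability density on ℝ. -/
def IsDensity (f : ℝ → ℝ) : Prop :=
  (∀ x, 0 ≤ f x) ∧ MeasureTheory.Integrable f ∧ (∫ x, f x) = 1

/-- The density `f` has mean `μ`. -/
def HasMean (f : ℝ → ℝ) (μ : ℝ) : Prop :=
  MeasureTheory.Integrable (fun x => x * f x) ∧ (∫ x, x * f x) = μ

/-- The density `f` (with mean `μ`) has variance `σ2`. -/
def HasVar (f : ℝ → ℝ) (μ σ2 : ℝ) : Prop :=
  MeasureTheory.Integrable (fun x => (x - μ) ^ 2 * f x) ∧ (∫ x, (x - μ) ^ 2 * f x) = σ2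


open Metric

lemma sqrt_two_pi_r {r : ℝ} (hr : 0 < r) :
    Real.sqrt (2 * Real.pi * r ^ 2) = Real.sqrt (2 * Real.pi) * r := by
  rw [Real.sqrt_mul (by positivity), Real.sqrt_sq hr.le]

lemma gauss_pos {r : ℝ} (hr : 0 < r) (t : ℝ) : 0 < gaussDensity r t := by
  unfold gaussDensity
  have : 0 < Real.sqrt (2 * Real.pi * r ^ 2) := by positivity
  positivity

lemma gauss_le {r : ℝ} (hr : 0 < r) (t : ℝ) :
    gaussDensity r t ≤ (Real.sqrt (2 * Real.pi) * r)⁻¹ := by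
  unfold gaussDensity
  rw [sqrt_two_pi_r hr]
  have h1 : Real.exp (-t ^ 2 / (2 * r ^ 2)) ≤ 1 :=
    Real.exp_le_one_iff.mpr (by rw [neg_div]; exact neg_nonpos.mpr (by positivity))
  have h2 : (0:ℝ) ≤ (Real.sqrt (2 * Real.pi) * r)⁻¹ := by positivity
  calc (Real.sqrt (2 * Real.pi) * r)⁻¹ * Real.exp (-t ^ 2 / (2 * r ^ 2))
      ≤ (Real.sqrt (2 * Real.pi) * r)⁻¹ * 1 := by
        exact mul_le_mul_of_nonneg_left h1 h2
    _ = _ := mul_one _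

lemma gauss_continuous (r : ℝ) : Continuous (gaussDensity r) := by
  unfold gaussDensity
  fun_prop

lemma abs_mul_exp_le {r : ℝ} (hr : 0 < r) (t : ℝ) :
    |t| * Real.exp (-t ^ 2 / (2 * r ^ 2)) ≤ r := by
  have ha : t ^ 2 / (2 * r ^ 2) + 1 ≤ Real.exp (t ^ 2 / (2 * r ^ 2)) :=
    Real.add_one_le_exp _
  have hb : |t| ≤ r * Real.exp (t ^ 2 / (2 * r ^ 2)) := by
    have h0 : |t| ≤ r * (t ^ 2 / (2 * r ^ 2) + 1) := by
      have heq : r * (t ^ 2 / (2 * r ^ 2) + 1) = (t ^ 2 + r * (2 * r)) / (2 * r) := by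
        field_simp
      rw [heq, le_div_iff₀ (by positivity)]
      nlinarith [sq_abs t, sq_nonneg (|t| - r)]
    exact h0.trans (mul_le_mul_of_nonneg_left ha hr.le)
  have := mul_le_mul_of_nonneg_right hb (Real.exp_nonneg (-(t ^ 2 / (2 * r ^ 2))))
  rw [mul_assoc, ← Real.exp_add, add_neg_cancel, Real.exp_zero, mul_one] at this
  calc |t| * Real.exp (-t ^ 2 / (2 * r ^ 2))
      = |t| * Real.exp (-(t ^ 2 / (2 * r ^ 2))) := by rw [neg_div]
    _ ≤ r := this

lemma deriv_kernel_bound {r : ℝ} (hr : 0 < r) (t : ℝ) :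
    |t / r ^ 2 * gaussDensity r t| ≤ (Real.sqrt (2 * Real.pi) * r ^ 2)⁻¹ := by
  unfold gaussDensity
  rw [sqrt_two_pi_r hr, abs_mul, abs_mul, abs_div,
    abs_of_pos (by positivity : (0:ℝ) < r ^ 2),
    abs_of_pos (by positivity : (0:ℝ) < (Real.sqrt (2 * Real.pi) * r)⁻¹),
    abs_of_pos (Real.exp_pos _)]
  have h := abs_mul_exp_le hr t
  have hS : (0:ℝ) < Real.sqrt (2 * Real.pi) := by positivity
  rw [div_mul_eq_mul_div, div_le_iff₀ (by positivity)]
  calc |t| * ((Real.sqrt (2 * Real.pi) * r)⁻¹ * Real.exp (-t ^ 2 / (2 * r ^ 2)))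
      = (|t| * Real.exp (-t ^ 2 / (2 * r ^ 2))) * (Real.sqrt (2 * Real.pi) * r)⁻¹ := by ring
    _ ≤ r * (Real.sqrt (2 * Real.pi) * r)⁻¹ := by
        exact mul_le_mul_of_nonneg_right h (by positivity)
    _ = (Real.sqrt (2 * Real.pi) * r ^ 2)⁻¹ * r ^ 2 := by
        field_simp

lemma hasDerivAt_kernel {r : ℝ} (hr : 0 < r) (y x : ℝ) :
    HasDerivAt (fun x => gaussDensity r (x - y))
      ((y - x) / r ^ 2 * gaussDensity r (x - y)) x := by
  unfold gaussDensity
  have h1 : HasDerivAt (fun x : ℝ => -(x - y) ^ 2 / (2 * r ^ 2)) ((y - x) / r ^ 2) x := by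
    have h0 : HasDerivAt (fun x : ℝ => x - y) 1 x := (hasDerivAt_id x).sub_const y
    have h2 := ((h0.pow 2).neg.div_const (2 * r ^ 2))
    refine h2.congr_deriv ?_
    field_simp
    ring
  have h3 := (h1.exp).const_mul (Real.sqrt (2 * Real.pi * r ^ 2))⁻¹
  refine h3.congr_deriv ?_
  ring

lemma integrable_kernel {f : ℝ → ℝ} (hf : Integrable f) {r : ℝ} (hr : 0 < r) (x : ℝ) :
    Integrable (fun y => f y * gaussDensity r (x - y)) := by
  have hc : Continuous fun y : ℝ => gaussDensity r (x - y) :=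
    (gauss_continuous r).comp (continuous_const.sub continuous_id)
  have h := hf.bdd_mul (f := fun y : ℝ => gaussDensity r (x - y))
    (c := (Real.sqrt (2 * Real.pi) * r)⁻¹)
    hc.aestronglyMeasurable
    (Eventually.of_forall fun y => by
      rw [Real.norm_eq_abs, abs_of_pos (gauss_pos hr _)]
      exact gauss_le hr _)
  simpa [mul_comm] using h

lemma smoothed_le {f : ℝ → ℝ} (hf : IsDensity f) {r : ℝ} (hr : 0 < r) (x : ℝ) :
    smoothed f r x ≤ (Real.sqrt (2 * Real.pi) * r)⁻¹ := by
  have h1 : Integrable (fun y => f y * gaussDensity r (x - y)) := integrable_kernel hf.2.1 hr x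
  have h2 : Integrable (fun y => f y * (Real.sqrt (2 * Real.pi) * r)⁻¹) :=
    hf.2.1.mul_const _
  calc smoothed f r x ≤ ∫ y, f y * (Real.sqrt (2 * Real.pi) * r)⁻¹ := by
        refine integral_mono h1 h2 fun y => ?_
        exact mul_le_mul_of_nonneg_left (gauss_le hr _) (hf.1 y)
    _ = (∫ y, f y) * (Real.sqrt (2 * Real.pi) * r)⁻¹ := integral_mul_const _ _
    _ = (Real.sqrt (2 * Real.pi) * r)⁻¹ := by rw [hf.2.2, one_mul]

lemma hasDerivAt_smoothed {f : ℝ → ℝ} (hf : IsDensity f) {r : ℝ} (hr : 0 < r) (x : ℝ) :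
    Integrable (fun y => f y * ((y - x) / r ^ 2 * gaussDensity r (x - y))) ∧
    HasDerivAt (smoothed f r)
      (∫ y, f y * ((y - x) / r ^ 2 * gaussDensity r (x - y))) x := by
  have key := hasDerivAt_integral_of_dominated_loc_of_deriv_le
    (F := fun x y => f y * gaussDensity r (x - y))
    (F' := fun x y => f y * ((y - x) / r ^ 2 * gaussDensity r (x - y)))
    (x₀ := x) (bound := fun y => |f y| * (Real.sqrt (2 * Real.pi) * r ^ 2)⁻¹)
    (s := Metric.ball x 1) (Metric.ball_mem_nhds x one_pos)
    (Eventually.of_forall fun x' =>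
      (hf.2.1.aestronglyMeasurable.mul
        (((gauss_continuous r).comp (continuous_const.sub continuous_id)).aestronglyMeasurable)))
    (integrable_kernel hf.2.1 hr x)
    (hf.2.1.aestronglyMeasurable.mul
      ((((continuous_id.sub continuous_const).div_const _).mul
        ((gauss_continuous r).comp (continuous_const.sub continuous_id))).aestronglyMeasurable))
    (Eventually.of_forall fun y => fun x' _ => by
      rw [Real.norm_eq_abs, abs_mul]
      refine mul_le_mul_of_nonneg_left ?_ (abs_nonneg _)
      have h := deriv_kernel_bound hr (x' - y)
      calc |(y - x') / r ^ 2 * gaussDensity r (x' - y)|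
          = |(x' - y) / r ^ 2 * gaussDensity r (x' - y)| := by
            rw [abs_mul, abs_mul, abs_div, abs_div, abs_sub_comm]
        _ ≤ _ := h)
    (hf.2.1.abs.mul_const _)
    (Eventually.of_forall fun y => fun x' _ =>
      ((hasDerivAt_kernel hr y x').const_mul (f y)))
  exact key

lemma smoothed_def (f : ℝ → ℝ) (r x : ℝ) :
    smoothed f r x = ∫ y, f y * gaussDensity r (x - y) := rfl

/-- Score bound in terms of density: for every `x` with `f_r(x) > 0`,
`|s_r(x)| ≤ (1/r)·√(2·log(1/(√(2π)·r·f_r(x))))`. -/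
theorem score_bound_from_density
    (fStar : ℝ → ℝ) (r : ℝ) (hr : 0 < r) (hf : IsDensity fStar)
    (x : ℝ) (hx : 0 < smoothed fStar r x) :
    |score fStar r x| ≤
      (1 / r) * Real.sqrt (2 * Real.log (1 / (Real.sqrt (2 * Real.pi) * r * smoothed fStar r x))) := by
  obtain ⟨h0, hfint, hfone⟩ := hf
  have hf' : IsDensity fStar := ⟨h0, hfint, hfone⟩
  have hd := hasDerivAt_smoothed hf' hr x
  set D := ∫ y, fStar y * ((y - x) / r ^ 2 * gaussDensity r (x - y)) with hDdef
  have hderiv : deriv (smoothed fStar r) x = D := hd.2.deriv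
  set fx := smoothed fStar r x with hfx
  set s := score fStar r x with hs
  have hsD : s = D / fx := by rw [hs, score, hderiv]
  set h := r ^ 2 * s with hh
  set c := h * s with hc
  have hcD : c * fx = h * D := by
    rw [hc, hsD]
    field_simp
  set E := Real.exp (c - h ^ 2 / (2 * r ^ 2)) with hE
  have hEpos : 0 < E := Real.exp_pos _
  -- pointwise inequality
  have hpt : ∀ y, E * ((1 - c) * (fStar y * gaussDensity r (x - y))
      + h * (fStar y * ((y - x) / r ^ 2 * gaussDensity r (x - y))))
      ≤ fStar y * gaussDensity r (x + h - y) := by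
    intro y
    have hgauss : gaussDensity r (x + h - y)
        = gaussDensity r (x - y) * Real.exp ((y - x) * h / r ^ 2 - h ^ 2 / (2 * r ^ 2)) := by
      unfold gaussDensity
      rw [mul_assoc ((Real.sqrt (2 * Real.pi * r ^ 2))⁻¹), ← Real.exp_add]
      congr 1
      field_simp
      ring
    have hexp : E * (1 + ((y - x) * h / r ^ 2 - c))
        ≤ Real.exp ((y - x) * h / r ^ 2 - h ^ 2 / (2 * r ^ 2)) := by
      have h1 : ((y - x) * h / r ^ 2 - c) + 1 ≤ Real.exp ((y - x) * h / r ^ 2 - c) :=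
        Real.add_one_le_exp _
      calc E * (1 + ((y - x) * h / r ^ 2 - c))
          ≤ E * Real.exp ((y - x) * h / r ^ 2 - c) := by
            exact mul_le_mul_of_nonneg_left (by linarith) hEpos.le
        _ = Real.exp ((y - x) * h / r ^ 2 - h ^ 2 / (2 * r ^ 2)) := by
            rw [hE, ← Real.exp_add]
            congr 1
            ring
    calc E * ((1 - c) * (fStar y * gaussDensity r (x - y))
          + h * (fStar y * ((y - x) / r ^ 2 * gaussDensity r (x - y))))
        = (fStar y * gaussDensity r (x - y)) * (E * (1 + ((y - x) * h / r ^ 2 - c))) := by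
          ring
      _ ≤ (fStar y * gaussDensity r (x - y))
            * Real.exp ((y - x) * h / r ^ 2 - h ^ 2 / (2 * r ^ 2)) := by
          exact mul_le_mul_of_nonneg_left hexp (mul_nonneg (h0 y) (gauss_pos hr _).le)
      _ = fStar y * gaussDensity r (x + h - y) := by rw [hgauss]; ring
  have hint1 := integrable_kernel hfint hr x
  have hint2 := hd.1
  have hintB : Integrable (fun y => E * ((1 - c) * (fStar y * gaussDensity r (x - y))
      + h * (fStar y * ((y - x) / r ^ 2 * gaussDensity r (x - y))))) :=
    ((hint1.const_mul (1 - c)).add (hint2.const_mul h)).const_mul E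
  have hmono := integral_mono hintB (integrable_kernel hfint hr (x + h)) hpt
  have hLHS : (∫ y, E * ((1 - c) * (fStar y * gaussDensity r (x - y))
      + h * (fStar y * ((y - x) / r ^ 2 * gaussDensity r (x - y))))) = E * fx := by
    rw [integral_const_mul, integral_add (hint1.const_mul _) (hint2.const_mul _),
      integral_const_mul, integral_const_mul, hfx, smoothed_def, ← hDdef]
    have : (1 - c) * (∫ y, fStar y * gaussDensity r (x - y)) + h * D
        = (∫ y, fStar y * gaussDensity r (x - y)) - c * fx + h * D := by
      rw [hfx, smoothed_def]; ring
    rw [this, hcD]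
    ring
  have key : E * fx ≤ (Real.sqrt (2 * Real.pi) * r)⁻¹ := by
    rw [hLHS] at hmono
    exact hmono.trans (smoothed_le hf' hr (x + h))
  -- exponent simplification
  have hexpval : c - h ^ 2 / (2 * r ^ 2) = r ^ 2 * s ^ 2 / 2 := by
    rw [hc, hh]
    field_simp
    ring
  have key2 : fx * Real.exp (r ^ 2 * s ^ 2 / 2) ≤ (Real.sqrt (2 * Real.pi) * r)⁻¹ := by
    rw [← hexpval]
    calc fx * E = E * fx := mul_comm _ _
      _ ≤ _ := key
  have hMpos : (0:ℝ) < (Real.sqrt (2 * Real.pi) * r)⁻¹ := by positivity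
  have hlog : Real.log fx + r ^ 2 * s ^ 2 / 2 ≤ Real.log ((Real.sqrt (2 * Real.pi) * r)⁻¹) := by
    have hl := Real.log_le_log (by positivity) key2
    rwa [Real.log_mul (ne_of_gt hx) (Real.exp_ne_zero _), Real.log_exp] at hl
  set L := Real.log (1 / (Real.sqrt (2 * Real.pi) * r * fx)) with hL
  have hLval : Real.log ((Real.sqrt (2 * Real.pi) * r)⁻¹) - Real.log fx = L := by
    rw [hL, one_div, Real.log_inv, Real.log_inv,
      Real.log_mul (by positivity) (ne_of_gt hx)]
    ring
  have hsq : s ^ 2 ≤ (1 / r) ^ 2 * (2 * L) := by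
    have h1 : r ^ 2 * s ^ 2 / 2 ≤ L := by linarith
    have h2 : (1 / r) ^ 2 * (2 * L) = 2 * L / r ^ 2 := by
      field_simp
    rw [h2, le_div_iff₀ (by positivity)]
    nlinarith
  calc |s| = Real.sqrt (s ^ 2) := (Real.sqrt_sq_eq_abs s).symm
    _ ≤ Real.sqrt ((1 / r) ^ 2 * (2 * L)) := Real.sqrt_le_sqrt hsq
    _ = (1 / r) * Real.sqrt (2 * L) := by
        rw [Real.sqrt_mul (sq_nonneg _), Real.sqrt_sq (by positivity)]
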